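/- Let 0 < |λ| < 1 and consider the vector field G(x,ξ,η) = ((1/(s+1))(−λξ² + sη² − (λ+1)ξη), λxξ, xη) on ℝ³ with −1 < s < 0. On the half-space {η > 0}, the function f(x,ξ,η) = ξ·η^{−λ} is a first integral of G. -/

import Mathlib

/-- The transformed geodesic field `F₅ₛ` of `Q₅ₛ` on `h(λ)` in coordinates `(x, ξ, η)`. -/
noncomputable def G5 (l s : ℝ) (v : Fin 3 → ℝ) : Fin 3 → ℝ :=
  ![1 / (s + 1) * (-l * (v 1) ^ 2 + s * (v 2) ^ 2 - (l + 1) * v 1 * v 2),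
    l * v 0 * v 1, v 0 * v 2]

/-- For `0 < |λ| < 1` and `−1 < s < 0`, on `{η > 0}` the function
`f = ξ·η^{−λ}` is a first integral of `G`. -/
theorem stmt_14 (l s : ℝ) (h1 : 0 < |l|) (h2 : |l| < 1) (hs1 : -1 < s) (hs2 : s < 0)
    (γ : ℝ → Fin 3 → ℝ) (t : ℝ) (hη : 0 < γ t 2)
    (hγ : HasDerivAt γ (G5 l s (γ t)) t) :
    HasDerivAt (fun u => γ u 1 * (γ u 2) ^ (-l : ℝ)) 0 t := by
  have hd := hasDerivAt_pi.mp hγ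
  have hξ : HasDerivAt (fun u => γ u 1) (l * γ t 0 * γ t 1) t := by
    simpa [G5] using hd 1
  have hη' : HasDerivAt (fun u => γ u 2) (γ t 0 * γ t 2) t := by
    simpa [G5] using hd 2
  have hr := hη'.rpow_const (p := (-l : ℝ)) (Or.inl hη.ne')
  have := hξ.mul hr
  refine this.congr_deriv (Eq.symm ?_)
  have key : γ t 2 ^ (-l - 1) * γ t 2 = γ t 2 ^ (-l : ℝ) := by
    rw [← Real.rpow_add_one hη.ne']
    norm_num
  linear_combination (γ t 1 * γ t 0 * l) * key
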